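/- In the category of modules over a semiring R, the composition of two normal epimorphisms is a normal epimorphism: if g : L → M and f : M → N are each coequalizers of some morphism with the zero map, then f ∘ g is also such a coequalizer. -/
import Mathlib


universe u

/-- A bundled module over a semiring `R`. -/
structure BundledMod (R : Type u) [Semiring R] : Type (u + 1) where
  carrier : Type u
  [addCommMonoid : AddCommMonoid carrier]
  [module : Module R carrier]

attribute [instance] BundledMod.addCommMonoid BundledMod.module

/-- `f` is a coequalizer of some morphism `g` and the zero map, expressed by the
universal property in the category of `R`-modules. -/
def IsNormalEpi {R : Type u} [Semiring R] {M N : Type u}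
    [AddCommMonoid M] [Module R M] [AddCommMonoid N] [Module R N]
    (f : M →ₗ[R] N) : Prop :=
  ∃ (L : BundledMod R) (g : L.carrier →ₗ[R] M),
    (∀ l, f (g l) = 0) ∧
    ∀ (P : BundledMod R) (h : M →ₗ[R] P.carrier),
      (∀ l, h (g l) = 0) → ∃! u : N →ₗ[R] P.carrier, u.comp f = h

section Quot
variable {R : Type u} [Semiring R] {M : Type u} [AddCommMonoid M] [Module R M]
  (S : Submodule R M)

/-- The additive congruence identifying `x` and `y` when `x + s = y + t` for `s,t ∈ S`. -/
def satCon : AddCon M where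
  r x y := ∃ s ∈ S, ∃ t ∈ S, x + s = y + t
  iseqv := by
    constructor
    · exact fun x => ⟨0, S.zero_mem, 0, S.zero_mem, rfl⟩
    · rintro x y ⟨s, hs, t, ht, h⟩
      exact ⟨t, ht, s, hs, h.symm⟩
    · rintro x y z ⟨s, hs, t, ht, h⟩ ⟨s', hs', t', ht', h'⟩
      exact ⟨s + s', S.add_mem hs hs', t' + t, S.add_mem ht' ht, by
        rw [← add_assoc, h, add_right_comm, h', add_right_comm, add_assoc, add_comm t t']⟩
  add' := by
    rintro x y x' y' ⟨s, hs, t, ht, h⟩ ⟨s', hs', t', ht', h'⟩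
    exact ⟨s + s', S.add_mem hs hs', t + t', S.add_mem ht ht', by
      rw [add_add_add_comm, h, h', add_add_add_comm]⟩

instance : SMul R (satCon S).Quotient where
  smul r := AddCon.lift _ ((satCon S).mk'.comp (DistribMulAction.toAddMonoidHom M r))
    (by
      rintro x y ⟨s, hs, t, ht, h⟩
      show ((satCon S).mk'.comp (DistribMulAction.toAddMonoidHom M r)) x =
        ((satCon S).mk'.comp (DistribMulAction.toAddMonoidHom M r)) y
      simp only [AddMonoidHom.comp_apply, DistribMulAction.toAddMonoidHom_apply]
      rw [AddCon.coe_mk', AddCon.eq]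
      exact ⟨r • s, S.smul_mem r hs, r • t, S.smul_mem r ht, by
        rw [← smul_add, ← smul_add, h]⟩)

lemma satCon_smul_mk (r : R) (x : M) :
    (r • (x : (satCon S).Quotient)) = ((r • x : M) : (satCon S).Quotient) := rfl

instance : Module R (satCon S).Quotient where
  one_smul x := by induction x using AddCon.induction_on with
    | H x => rw [satCon_smul_mk, one_smul]
  mul_smul r s x := by induction x using AddCon.induction_on with
    | H x => simp only [satCon_smul_mk, mul_smul]
  smul_zero r := by rw [show (0 : (satCon S).Quotient) = ((0:M) : (satCon S).Quotient) from rfl,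
    satCon_smul_mk, smul_zero]
  smul_add r x y := by
    induction x using AddCon.induction_on with
    | H x => induction y using AddCon.induction_on with
      | H y =>
        rw [show ((x : (satCon S).Quotient) + (y:M)) = ((x + y : M) : (satCon S).Quotient) from rfl,
          satCon_smul_mk, satCon_smul_mk, satCon_smul_mk, smul_add]
        rfl
  add_smul r s x := by induction x using AddCon.induction_on with
    | H x => rw [satCon_smul_mk, satCon_smul_mk, satCon_smul_mk, add_smul]; rfl
  zero_smul x := by induction x using AddCon.induction_on with
    | H x => rw [satCon_smul_mk, zero_smul]; rfl

/-- The quotient map as a linear map. -/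
def satMk : M →ₗ[R] (satCon S).Quotient where
  toFun := (satCon S).mk'
  map_add' _ _ := rfl
  map_smul' _ _ := rfl

lemma satMk_surjective : Function.Surjective (satMk (R := R) S) :=
  AddCon.mk'_surjective

lemma satMk_eq {x y : M} : satMk S x = satMk S y ↔ ∃ s ∈ S, ∃ t ∈ S, x + s = y + t :=
  AddCon.eq _

end Quot

/-- A normal epimorphism of modules over a semiring is surjective. -/
theorem normalEpi_surjective {R : Type u} [Semiring R] {M N : Type u}
    [AddCommMonoid M] [Module R M] [AddCommMonoid N] [Module R N]
    (f : M →ₗ[R] N) (hf : IsNormalEpi f) : Function.Surjective f := by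
  obtain ⟨W, j, hj0, huniv⟩ := hf
  set S : Submodule R M := LinearMap.range j with hS
  set Q := (satCon S).Quotient
  set π : M →ₗ[R] Q := satMk S with hπ
  -- π kills j
  have hπj : ∀ w, π (j w) = 0 := by
    intro w
    have : π (j w) = π 0 := by
      rw [satMk_eq]
      exact ⟨0, S.zero_mem, j w, ⟨w, rfl⟩, by rw [add_zero, zero_add]⟩
    rw [this, map_zero]
  obtain ⟨v, hv, -⟩ := huniv ⟨Q⟩ π hπj
  -- f descends to u : Q → N
  have hconst : ∀ x y : M, (satCon S) x y → f x = f y := by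
    rintro x y ⟨s, ⟨a, rfl⟩, t, ⟨b, rfl⟩, hxy⟩
    have := congrArg f hxy
    simpa only [map_add, hj0 a, hj0 b, add_zero] using this
  let u₀ : Q →+ N := AddCon.lift _ f.toAddMonoidHom hconst
  have hu₀ : ∀ x : M, u₀ (π x) = f x := fun _ => rfl
  let u : Q →ₗ[R] N :=
    { toFun := u₀
      map_add' := map_add u₀
      map_smul' := by
        intro r q
        induction q using AddCon.induction_on with
        | H x =>
          show u₀ (r • π x) = r • u₀ (π x)
          rw [← map_smul π r x, hu₀, hu₀, map_smul] }
  have huπ : ∀ x, u (π x) = f x := hu₀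
  -- u ∘ v = id
  have huv : ∀ n, u (v n) = n := by
    obtain ⟨w, hw, hwu⟩ := huniv ⟨N⟩ f hj0
    have h1 : (u.comp v).comp f = f := by
      ext x
      simp only [LinearMap.comp_apply]
      rw [show v (f x) = π x from congrArg (fun t => t x) hv, huπ]
    have h2 := hwu _ h1
    have h3 := hwu _ (LinearMap.id_comp f)
    intro n
    calc u (v n) = (u.comp v) n := rfl
    _ = LinearMap.id (R := R) n := by rw [h2, ← h3]
    _ = n := rfl
  intro n
  obtain ⟨m, hm⟩ := satMk_surjective S (v n)
  refine ⟨m, ?_⟩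
  have : u (v n) = n := huv n
  rw [← this, ← hm, huπ]

/-- In the category of modules over a semiring, the composition of two normal
epimorphisms (coequalizers of some morphism with the zero map) is again a normal
epimorphism. -/
theorem stmt7 {R : Type u} [Semiring R] {L M N : Type u}
    [AddCommMonoid L] [Module R L] [AddCommMonoid M] [Module R M]
    [AddCommMonoid N] [Module R N]
    (g : L →ₗ[R] M) (f : M →ₗ[R] N)
    (hg : IsNormalEpi g) (hf : IsNormalEpi f) :
    IsNormalEpi (f.comp g) := by
  obtain ⟨W₁, g', hg'0, hgU⟩ := hg
  obtain ⟨W₂, j, hj0, hfU⟩ := hf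
  have hgsurj : Function.Surjective g := normalEpi_surjective g ⟨W₁, g', hg'0, hgU⟩
  set K : Submodule R L := LinearMap.ker (f.comp g) with hK
  refine ⟨⟨K⟩, K.subtype, fun l => l.2, ?_⟩
  intro P h hvan
  -- factor h through g
  obtain ⟨h₁, hh₁, huniq₁⟩ := hgU P h (fun w => by
    have : g' w ∈ K := by
      simp only [hK, LinearMap.mem_ker, LinearMap.comp_apply, hg'0 w, map_zero]
    exact hvan ⟨g' w, this⟩)
  -- h₁ vanishes on range of j
  have hj1 : ∀ w, h₁ (j w) = 0 := by
    intro w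
    obtain ⟨a, ha⟩ := hgsurj (j w)
    have haK : a ∈ K := by
      simp only [hK, LinearMap.mem_ker, LinearMap.comp_apply, ha, hj0 w]
    have : h₁ (j w) = h a := by rw [← ha, ← hh₁]; rfl
    rw [this]
    exact hvan ⟨a, haK⟩
  obtain ⟨u, hu, huniq₂⟩ := hfU P h₁ hj1
  refine ⟨u, ?_, ?_⟩
  · ext l
    simp only [LinearMap.comp_apply]
    rw [← hh₁, ← hu]
    rfl
  · intro u' hu'
    refine huniq₂ u' (huniq₁ (u'.comp f) ?_)
    ext l
    simp only [LinearMap.comp_apply]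
    rw [← hu']
    rfl
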